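/- Let δ ≥ 1 be an indecomposable ordinal, i.e., γ + δ = δ for every γ < δ. If the set {α : α < δ} is written as the union of finitely many sets A_0, …, A_n, then there is some i ≤ n such that A_i has order type δ (A_i is order isomorphic, as a linearly ordered set of ordinals, to δ). -/

import Mathlib

open Ordinal Set

namespace Ordinal

noncomputable def nadd (a b : Ordinal.{u}) : Ordinal.{u} :=
  max (⨆ x : Set.Iio a, Order.succ (nadd x.1 b)) (⨆ x : Set.Iio b, Order.succ (nadd a x.1))
termination_by (a, b)
decreasing_by
  · exact Prod.Lex.left _ _ x.2
  · exact Prod.Lex.right _ x.2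

infixl:65 " ♯ " => Ordinal.nadd

theorem nadd_le_iff {a b c : Ordinal.{u}} :
    a ♯ b ≤ c ↔ (∀ a' < a, a' ♯ b < c) ∧ ∀ b' < b, a ♯ b' < c := by
  rw [nadd, max_le_iff, Ordinal.iSup_le_iff, Ordinal.iSup_le_iff]
  simp only [Order.succ_le_iff, Subtype.forall, Set.mem_Iio]

theorem nadd_lt_nadd_left {b c : Ordinal.{u}} (h : b < c) (a : Ordinal.{u}) : a ♯ b < a ♯ c :=
  (nadd_le_iff.1 le_rfl).2 _ h

theorem nadd_lt_nadd_right {a b : Ordinal.{u}} (h : a < b) (c : Ordinal.{u}) : a ♯ c < b ♯ c :=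
  (nadd_le_iff.1 le_rfl).1 _ h

theorem nadd_le_nadd_left {b c : Ordinal.{u}} (h : b ≤ c) (a : Ordinal.{u}) : a ♯ b ≤ a ♯ c := by
  rcases h.lt_or_eq with h | rfl
  · exact (nadd_lt_nadd_left h a).le
  · exact le_rfl

theorem nadd_le_nadd_right {a b : Ordinal.{u}} (h : a ≤ b) (c : Ordinal.{u}) : a ♯ c ≤ b ♯ c := by
  rcases h.lt_or_eq with h | rfl
  · exact (nadd_lt_nadd_right h c).le
  · exact le_rfl

theorem nadd_zero (a : Ordinal.{u}) : a ♯ 0 = a := by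
  induction a using WellFoundedLT.induction with
  | ind a IH =>
  refine le_antisymm (nadd_le_iff.2 ⟨fun a' ha' => by rwa [IH a' ha'], fun b' hb' =>
    absurd hb' not_lt_zero⟩) (le_of_forall_lt fun z hz => ?_)
  rw [← IH z hz]
  exact nadd_lt_nadd_right hz 0

theorem zero_nadd (a : Ordinal.{u}) : 0 ♯ a = a := by
  induction a using WellFoundedLT.induction with
  | ind a IH =>
  refine le_antisymm (nadd_le_iff.2 ⟨fun a' ha' => absurd ha' not_lt_zero,
    fun b' hb' => by rwa [IH b' hb']⟩) (le_of_forall_lt fun z hz => ?_)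
  rw [← IH z hz]
  exact nadd_lt_nadd_left hz 0

theorem nadd_succ (a b : Ordinal.{u}) : a ♯ Order.succ b = Order.succ (a ♯ b) := by
  induction a using WellFoundedLT.induction with
  | ind a IH =>
  refine le_antisymm (nadd_le_iff.2 ⟨fun a' ha' => ?_, fun b' hb' => ?_⟩)
    (Order.succ_le_of_lt (nadd_lt_nadd_left (Order.lt_succ b) a))
  · rw [IH a' ha', Order.succ_lt_succ_iff]
    exact nadd_lt_nadd_right ha' b
  · exact Order.lt_succ_of_le (nadd_le_nadd_left (Order.le_of_lt_succ hb') a)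

theorem nadd_nat {a : Ordinal.{u}} (n : ℕ) : a ♯ n = a + n := by
  induction n with
  | zero => simp [nadd_zero]
  | succ n ih =>
    rw [Nat.cast_succ, add_one_eq_succ, nadd_succ, ih, add_succ]

end Ordinal

universe u v


theorem my_nadd_div_mod_le (u : Ordinal.{v}) (hu : u ≠ 0)
    (hcl : ∀ p < u, ∀ q < u, p ♯ q < u) :
    ∀ x y : Ordinal.{v}, x ♯ y ≤ u * (x / u ♯ y / u) + (x % u ♯ y % u) := by
  intro x
  induction x using WellFoundedLT.induction with
  | ind x IHx =>
  intro y
  induction y using WellFoundedLT.induction with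
  | ind y IHy =>
  rw [nadd_le_iff]
  have hmm : ∀ z w : Ordinal.{v}, z < w →
      z / u < w / u ∨ (z / u = w / u ∧ z % u < w % u) := by
    intro z w hzw
    have hd : z / u ≤ w / u := Ordinal.div_le_left hzw.le u
    rcases eq_or_lt_of_le hd with he | hlt
    · refine Or.inr ⟨he, ?_⟩
      have hz := Ordinal.div_add_mod z u
      have hw := Ordinal.div_add_mod w u
      rw [← hz, ← hw, he] at hzw
      exact (add_lt_add_iff_left _).1 hzw
    · exact Or.inl hlt
  constructor
  · intro x' hx'
    have h1 : x' ♯ y ≤ u * (x' / u ♯ y / u) + (x' % u ♯ y % u) := IHx x' hx' y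
    rcases hmm x' x hx' with hlt | ⟨heq, hmod⟩
    · refine h1.trans_lt (lt_of_lt_of_le ?_ le_self_add)
      calc u * (x' / u ♯ y / u) + (x' % u ♯ y % u)
          < u * (x' / u ♯ y / u) + u :=
            add_lt_add_right (hcl _ (Ordinal.mod_lt _ hu) _ (Ordinal.mod_lt _ hu)) _
        _ = u * (Order.succ (x' / u ♯ y / u)) := by rw [mul_succ]
        _ ≤ u * (x / u ♯ y / u) := by
            apply mul_le_mul_right
            rw [Order.succ_le_iff]
            exact nadd_lt_nadd_right hlt _
    · refine h1.trans_lt ?_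
      rw [heq]
      exact add_lt_add_right (nadd_lt_nadd_right hmod _) _
  · intro y' hy'
    have h1 : x ♯ y' ≤ u * (x / u ♯ y' / u) + (x % u ♯ y' % u) := IHy y' hy'
    rcases hmm y' y hy' with hlt | ⟨heq, hmod⟩
    · refine h1.trans_lt (lt_of_lt_of_le ?_ le_self_add)
      calc u * (x / u ♯ y' / u) + (x % u ♯ y' % u)
          < u * (x / u ♯ y' / u) + u :=
            add_lt_add_right (hcl _ (Ordinal.mod_lt _ hu) _ (Ordinal.mod_lt _ hu)) _
        _ = u * (Order.succ (x / u ♯ y' / u)) := by rw [mul_succ]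
        _ ≤ u * (x / u ♯ y / u) := by
            apply mul_le_mul_right
            rw [Order.succ_le_iff]
            exact nadd_lt_nadd_left hlt _
    · refine h1.trans_lt ?_
      rw [heq]
      exact add_lt_add_right (nadd_lt_nadd_left hmod _) _


theorem my_nadd_opow_closed : ∀ e a b : Ordinal.{v},
    a < ω ^ e → b < ω ^ e → a ♯ b < ω ^ e := by
  intro e
  induction e using WellFoundedLT.induction with
  | ind e IH =>
  intro a b ha hb
  rcases eq_or_ne a 0 with rfl | ha0
  · rwa [zero_nadd]
  rcases eq_or_ne b 0 with rfl | hb0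
  · rwa [nadd_zero]
  set u := max (log ω a) (log ω b) with hu
  have hue : u < e := by
    apply max_lt
    · exact (lt_opow_iff_log_lt one_lt_omega0 ha0).1 ha
    · exact (lt_opow_iff_log_lt one_lt_omega0 hb0).1 hb
  have hcl : ∀ p < ω ^ u, ∀ q < ω ^ u, p ♯ q < ω ^ u := fun p hp q hq => IH u hue p q hp hq
  have hu0 : (ω : Ordinal) ^ u ≠ 0 := (opow_pos u omega0_pos).ne'
  have ha' : a < ω ^ u * ω := by
    rw [← opow_succ]
    exact (lt_opow_succ_log_self one_lt_omega0 a).trans_le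
      (opow_le_opow_right omega0_pos (Order.succ_le_succ (le_max_left _ _)))
  have hb' : b < ω ^ u * ω := by
    rw [← opow_succ]
    exact (lt_opow_succ_log_self one_lt_omega0 b).trans_le
      (opow_le_opow_right omega0_pos (Order.succ_le_succ (le_max_right _ _)))
  have hi : a / ω ^ u < ω := (Ordinal.div_lt hu0).2 ha'
  have hj : b / ω ^ u < ω := (Ordinal.div_lt hu0).2 hb'
  have hij : (a / ω ^ u ♯ b / ω ^ u) < ω := by
    obtain ⟨m, hm⟩ := lt_omega0.1 hi
    obtain ⟨k, hk⟩ := lt_omega0.1 hj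
    rw [hm, hk, nadd_nat, ← Nat.cast_add]
    exact nat_lt_omega0 _
  calc a ♯ b ≤ ω ^ u * (a / ω ^ u ♯ b / ω ^ u) + (a % ω ^ u ♯ b % ω ^ u) :=
        my_nadd_div_mod_le _ hu0 hcl a b
    _ < ω ^ u * (a / ω ^ u ♯ b / ω ^ u) + ω ^ u :=
        add_lt_add_right (hcl _ (Ordinal.mod_lt _ hu0) _ (Ordinal.mod_lt _ hu0)) _
    _ = ω ^ u * Order.succ (a / ω ^ u ♯ b / ω ^ u) := by rw [mul_succ]
    _ < ω ^ u * ω := (mul_lt_mul_iff_right₀ (opow_pos u omega0_pos)).2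
        ((isSuccLimit_omega0).succ_lt hij)
    _ = ω ^ Order.succ u := (opow_succ _ _).symm
    _ ≤ ω ^ e := opow_le_opow_right omega0_pos (Order.succ_le_iff.2 hue)

theorem my_principal_nadd {o : Ordinal.{v}} (ho : ∀ γ < o, γ + o = o) :
    ∀ a < o, ∀ b < o, a ♯ b < o := by
  have hp : Ordinal.Principal (· + ·) o := principal_add_iff_add_left_eq_self.2 ho
  rcases principal_add_iff_zero_or_omega0_opow.1 hp with rfl | ⟨e, rfl⟩
  · intro a ha; exact absurd ha not_lt_zero
  · exact fun a ha b hb => my_nadd_opow_closed e a b ha hb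


instance (S : Set Ordinal.{u}) : IsWellOrder (Subtype S) (Subrel ((· < ·) : Ordinal.{u} → Ordinal.{u} → Prop) S) :=
  Subrel.instIsWellOrderSubtype _ _

noncomputable def tS (S : Set Ordinal.{u}) : Ordinal.{u+1} :=
  Ordinal.type (Subrel ((· < ·) : Ordinal.{u} → Ordinal.{u} → Prop) S)

theorem tS_mono {S T : Set Ordinal.{u}} (h : S ⊆ T) : tS S ≤ tS T := by
  refine RelEmbedding.ordinal_type_le ⟨⟨Set.inclusion h, Set.inclusion_injective h⟩, ?_⟩
  intro a b
  exact Iff.rfl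

theorem tS_Iio (δ : Ordinal.{u}) : tS (Set.Iio δ) = Ordinal.lift.{u+1} δ := by
  rw [← typein_ordinal δ]
  exact type_subrel _ _

theorem tS_init {S : Set Ordinal.{u}} {x : Ordinal.{u}} (hx : x ∈ S) :
    tS (S ∩ Set.Iio x) < tS S := by
  have h := (PrincipalSeg.ofElement (Subrel ((· < ·) : Ordinal.{u} → Ordinal.{u} → Prop) S)
    ⟨x, hx⟩).ordinal_type_lt
  refine lt_of_eq_of_lt ?_ h
  refine RelIso.ordinal_type_eq ⟨⟨fun z => ⟨⟨z.1, z.2.1⟩, z.2.2⟩,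
    fun b => ⟨b.1.1, b.1.2, b.2⟩, fun z => rfl, fun b => rfl⟩, Iff.rfl⟩

-- L0
theorem type_le_of_strictMono {α : Type v} (r : α → α → Prop) [IsWellOrder α r]
    {f : α → Ordinal.{v}} (hf : ∀ a b, r a b → f a < f b) {c : Ordinal.{v}}
    (hb : ∀ a, f a < c) : Ordinal.type r ≤ c := by
  have key : ∀ a, typein r a ≤ f a := by
    intro a
    induction a using ((IsWellFounded.wf (r := r)).induction) with
    | _ a IH =>
      refine le_of_forall_lt fun z hz => ?_
      obtain ⟨b, rfl⟩ := typein_surj r (hz.trans (typein_lt_type r a))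
      have hba : r b a := (typein_lt_typein r).1 hz
      exact lt_of_le_of_lt (IH b hba) (hf b a hba)
  by_contra hc
  push_neg at hc
  obtain ⟨a, ha⟩ := typein_surj r hc
  exact absurd (ha ▸ key a) (not_le.2 (hb a))

theorem tS_union (S T : Set Ordinal.{u}) : tS (S ∪ T) ≤ tS S ♯ tS T := by
  refine type_le_of_strictMono (Subrel ((· < ·) : Ordinal.{u} → Ordinal.{u} → Prop) (S ∪ T : Set Ordinal.{u}))
    (f := fun x : ↥(S ∪ T) => tS (S ∩ Set.Iio x.1) ♯ tS (T ∩ Set.Iio x.1)) ?_ ?_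
  · intro a b hab
    have hS : tS (S ∩ Set.Iio a.1) ≤ tS (S ∩ Set.Iio b.1) :=
      tS_mono (Set.inter_subset_inter_right _ (Set.Iio_subset_Iio hab.le))
    have hT : tS (T ∩ Set.Iio a.1) ≤ tS (T ∩ Set.Iio b.1) :=
      tS_mono (Set.inter_subset_inter_right _ (Set.Iio_subset_Iio hab.le))
    rcases a.2 with haS | haT
    · have : tS ((S ∩ Set.Iio b.1) ∩ Set.Iio a.1) < tS (S ∩ Set.Iio b.1) :=
        tS_init ⟨haS, hab⟩
      rw [Set.inter_assoc, Set.Iio_inter_Iio, min_eq_right hab.le] at this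
      exact (nadd_lt_nadd_right this _).trans_le (nadd_le_nadd_left hT _)
    · have : tS ((T ∩ Set.Iio b.1) ∩ Set.Iio a.1) < tS (T ∩ Set.Iio b.1) :=
        tS_init ⟨haT, hab⟩
      rw [Set.inter_assoc, Set.Iio_inter_Iio, min_eq_right hab.le] at this
      exact (nadd_lt_nadd_left this _).trans_le (nadd_le_nadd_right hS _)
  · intro a
    rcases a.2 with haS | haT
    · exact (nadd_lt_nadd_right (tS_init haS) _).trans_le
        (nadd_le_nadd_left (tS_mono Set.inter_subset_left) _)
    · exact (nadd_lt_nadd_left (tS_init haT) _).trans_le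
        (nadd_le_nadd_right (tS_mono Set.inter_subset_left) _)

theorem tS_eq_iso {S T : Set Ordinal.{u}} (h : tS S = tS T) :
    Nonempty (↥S ≃o ↥T) := by
  obtain ⟨e⟩ := Ordinal.type_eq.1 h
  exact ⟨OrderIso.ofRelIsoLT e⟩

theorem tS_empty : tS (∅ : Set Ordinal.{u}) = 0 := by
  haveI : IsEmpty (Subtype (∅ : Set Ordinal.{u})) := ⟨fun x => x.2⟩
  exact Ordinal.type_eq_zero_of_empty _



theorem indecomposable_partition_aux (δ : Ordinal.{u}) (hδ : 1 ≤ δ)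
    (hind : ∀ γ < δ, γ + δ = δ) (n : ℕ) (A : Fin (n + 1) → Set Ordinal.{u})
    (hcov : ⋃ i, A i = Set.Iio δ) :
    ∃ i : Fin (n + 1), Nonempty (↥(A i) ≃o ↥(Set.Iio δ)) := by
  set L := Ordinal.lift.{u+1} δ with hL
  have hL1 : 0 < L := by
    have : Ordinal.lift.{u+1} 0 < Ordinal.lift.{u+1} δ :=
      Ordinal.lift_lt.2 (lt_of_lt_of_le zero_lt_one hδ)
    simpa using this
  have hindL : ∀ γ < L, γ + L = L := by
    intro γ hγ
    obtain ⟨γ', hγ', rfl⟩ := Ordinal.lt_lift_iff.1 hγ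
    rw [hL, ← Ordinal.lift_add, hind γ' hγ']
  have hnadd := my_principal_nadd hindL
  -- finite union bound
  have hfin : ∀ (m : ℕ) (B : Fin m → Set Ordinal), (∀ i, tS (B i) < L) →
      tS (⋃ i, B i) < L := by
    intro m
    induction m with
    | zero =>
      intro B _
      have he : (⋃ i : Fin 0, B i) = (∅ : Set Ordinal) := by simp
      rw [he]
      have h0 : tS (∅ : Set Ordinal) = 0 := tS_empty
      rw [h0]
      exact hL1
    | succ m IH =>
      intro B hB
      have hsplit : (⋃ i, B i) = (⋃ i : Fin m, B i.castSucc) ∪ B (Fin.last m) := by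
        ext z
        simp only [Set.mem_iUnion, Set.mem_union]
        constructor
        · rintro ⟨i, hi⟩
          rcases Fin.eq_castSucc_or_eq_last i with ⟨j, rfl⟩ | rfl
          · exact Or.inl ⟨j, hi⟩
          · exact Or.inr hi
        · rintro (⟨i, hi⟩ | h)
          exacts [⟨i.castSucc, hi⟩, ⟨Fin.last m, h⟩]
      rw [hsplit]
      refine lt_of_le_of_lt (tS_union _ _) ?_
      exact hnadd _ (IH _ fun i => hB i.castSucc) _ (hB (Fin.last m))
  by_contra hcon
  push_neg at hcon
  have hlt : ∀ i, tS (A i) < L := by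
    intro i
    have hsub : A i ⊆ Set.Iio δ := hcov ▸ Set.subset_iUnion A i
    have hle : tS (A i) ≤ L := (tS_mono hsub).trans_eq (tS_Iio δ)
    rcases lt_or_eq_of_le hle with h | h
    · exact h
    · exact absurd (tS_eq_iso (h.trans (tS_Iio δ).symm)) (not_nonempty_iff.2 (hcon i))
  have := hfin _ A hlt
  rw [hcov, tS_Iio] at this
  exact lt_irrefl _ this

/-- If `δ ≥ 1` is an indecomposable ordinal and `{α | α < δ}` is split into finitely many
pieces, then one of the pieces is order isomorphic to `δ` (i.e. to `{α | α < δ}`). -/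
theorem indecomposable_partition (δ : Ordinal) (hδ : 1 ≤ δ)
    (hind : ∀ γ < δ, γ + δ = δ) (n : ℕ) (A : Fin (n + 1) → Set Ordinal)
    (hcov : ⋃ i, A i = Set.Iio δ) :
    ∃ i : Fin (n + 1), Nonempty (↥(A i) ≃o ↥(Set.Iio δ)) :=
  indecomposable_partition_aux δ hδ hind n A hcov
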